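/- arXiv:2203.14243 — 7 statements merged into one kernel-verified Lean document; each statement's English description precedes it below -/
import Mathlib

section
/- Let H be a complex Hilbert space, α ∈ ℂ with |α| < 1, and w a bounded operator on H with ‖w‖ < 1. Then ‖φ_α(w)‖ < 1, where φ_α(w) := (w - α·I)(I - conj(α)·w)⁻¹. -/
open ContinuousLinearMap

/-- The operator Möbius transform `φ_α(w) = (w - α·I)(I - conj(α)·w)⁻¹`. -/
noncomputable def mobius {H : Type*} [NormedAddCommGroup H] [InnerProductSpace ℂ H]
    (α : ℂ) (w : H →L[ℂ] H) : H →L[ℂ] H :=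
  (w - α • 1) * Ring.inverse (1 - (starRingEnd ℂ α) • w)

lemma key {H : Type*} [NormedAddCommGroup H] [InnerProductSpace ℂ H]
    (α : ℂ) (w : H →L[ℂ] H) (y : H) :
    ‖w y - α • y‖^2 =
      ‖y - (starRingEnd ℂ α) • w y‖^2
        - (1 - ‖α‖^2) * (‖y‖^2 - ‖w y‖^2) := by
  have h1 := @norm_sub_sq ℂ H _ _ _ (w y) (α • y)
  have h2 := @norm_sub_sq ℂ H _ _ _ y ((starRingEnd ℂ α) • w y)
  rw [inner_smul_right] at h1 h2
  rw [← inner_conj_symm (w y) y] at h1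
  set z := (inner ℂ y (w y) : ℂ) with hz
  have hre1 : Complex.re (α * (starRingEnd ℂ) z) = α.re * z.re + α.im * z.im := by
    simp [Complex.mul_re]
  have hre2 : Complex.re ((starRingEnd ℂ) α * z) = α.re * z.re + α.im * z.im := by
    simp [Complex.mul_re]
  have hn1 : ‖α • y‖ = ‖α‖ * ‖y‖ := by
    rw [norm_smul]
  have hn2 : ‖(starRingEnd ℂ α) • w y‖ = ‖α‖ * ‖w y‖ := by
    simp [norm_smul]
  simp only [RCLike.re_to_complex] at h1 h2
  rw [hre1] at h1
  rw [hre2] at h2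
  rw [hn1] at h1
  rw [hn2] at h2
  rw [h1, h2]
  ring


set_option maxHeartbeats 1000000 in
theorem stmt1 {H : Type*} [NormedAddCommGroup H] [InnerProductSpace ℂ H] [CompleteSpace H]
    (α : ℂ) (hα : ‖α‖ < 1) (w : H →L[ℂ] H) (hw : ‖w‖ < 1) :
    ‖mobius α w‖ < 1 := by
  have ha0 : 0 ≤ ‖α‖ := norm_nonneg _
  have hw0 : 0 ≤ ‖w‖ := norm_nonneg _
  have hnw : ‖(starRingEnd ℂ α) • w‖ < 1 := by
    rw [norm_smul]
    have h : ‖(starRingEnd ℂ) α‖ = ‖α‖ := by simp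
    rw [h]
    nlinarith
  set ε : ℝ := (1 - ‖α‖^2) * (1 - ‖w‖^2) / 4 with hεdef
  have f1 : 0 < 1 - ‖α‖^2 := by nlinarith
  have f2 : 0 < 1 - ‖w‖^2 := by nlinarith
  have hε : 0 < ε := by positivity
  have hε1 : ε ≤ 1 := by nlinarith [mul_nonneg (sq_nonneg (‖α‖)) (sq_nonneg ‖w‖)]
  -- the unit
  set u : H →L[ℂ] H := 1 - (starRingEnd ℂ α) • w with hudef
  set U : Units (H →L[ℂ] H) := Units.oneSub _ hnw with hUdef
  have hUval : (U : H →L[ℂ] H) = u := rfl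
  have hinv : Ring.inverse u = ((U⁻¹ : Units (H →L[ℂ] H)) : H →L[ℂ] H) := by
    rw [← hUval, Ring.inverse_unit]
  have hu_norm : ‖u‖ ≤ 2 := by
    calc ‖u‖ ≤ ‖(1 : H →L[ℂ] H)‖ + ‖(starRingEnd ℂ α) • w‖ := norm_sub_le _ _
    _ ≤ 1 + 1 := by
        refine add_le_add ?_ hnw.le
        simpa [ContinuousLinearMap.one_def] using ContinuousLinearMap.norm_id_le (𝕜 := ℂ) (E := H)
    _ = 2 := by norm_num
  have hUnit : IsUnit u := ⟨U, hUval⟩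
  -- pointwise bound
  have hbound : ∀ x : H, ‖mobius α w x‖ ≤ Real.sqrt (1 - ε) * ‖x‖ := by
    intro x
    set y : H := Ring.inverse u x with hydef
    have huy : u y = x := by
      calc u y = (u * Ring.inverse u) x := rfl
      _ = (1 : H →L[ℂ] H) x := by rw [Ring.mul_inverse_cancel u hUnit]
      _ = x := rfl
    have hm : mobius α w x = w y - α • y := by
      show ((w - α • 1) * Ring.inverse u) x = w y - α • y
      simp [ContinuousLinearMap.mul_apply, ContinuousLinearMap.sub_apply,
        ContinuousLinearMap.smul_apply, ContinuousLinearMap.one_apply, ← hydef]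
    have huy2 : y - (starRingEnd ℂ α) • w y = x := by
      rw [← huy, hudef]
      simp [ContinuousLinearMap.sub_apply, ContinuousLinearMap.smul_apply,
        ContinuousLinearMap.one_apply]
    have hkey := key α w y
    rw [huy2] at hkey
    clear_value y u U ε
    have hxy : ‖x‖ ≤ 2 * ‖y‖ := by
      calc ‖x‖ = ‖u y‖ := by rw [huy]
      _ ≤ ‖u‖ * ‖y‖ := le_opNorm u y
      _ ≤ 2 * ‖y‖ := by nlinarith [norm_nonneg y]
    have hwy : ‖w y‖ ≤ ‖w‖ * ‖y‖ := le_opNorm w y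
    have hy2 : ‖x‖^2 ≤ 4 * ‖y‖^2 := by nlinarith [norm_nonneg x, norm_nonneg y]
    have hc2 : ‖w y‖^2 ≤ ‖w‖^2 * ‖y‖^2 := by
      nlinarith [norm_nonneg (w y), mul_nonneg hw0 (norm_nonneg y)]
    have step1 : (1 - ‖w‖^2) * ‖y‖^2 ≤ ‖y‖^2 - ‖w y‖^2 := by nlinarith
    have step2 : (1 - ‖α‖^2) * ((1 - ‖w‖^2) * ‖y‖^2)
        ≤ (1 - ‖α‖^2) * (‖y‖^2 - ‖w y‖^2) :=
      mul_le_mul_of_nonneg_left step1 f1.le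
    have step3 : ε * ‖x‖^2 ≤ (1 - ‖α‖^2) * ((1 - ‖w‖^2) * ‖y‖^2) := by
      rw [hεdef]
      nlinarith [mul_nonneg (mul_nonneg f1.le f2.le)
        (by linarith : (0:ℝ) ≤ 4 * ‖y‖^2 - ‖x‖^2)]
    have hsq : ‖mobius α w x‖^2 ≤ (1 - ε) * ‖x‖^2 := by
      rw [hm, hkey]
      nlinarith [step2, step3]
    have h1ε : (0:ℝ) ≤ 1 - ε := by linarith
    calc ‖mobius α w x‖ = Real.sqrt (‖mobius α w x‖^2) :=
          (Real.sqrt_sq (norm_nonneg _)).symm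
    _ ≤ Real.sqrt ((1 - ε) * ‖x‖^2) := Real.sqrt_le_sqrt hsq
    _ = Real.sqrt (1 - ε) * ‖x‖ := by
        rw [Real.sqrt_mul h1ε, Real.sqrt_sq (norm_nonneg x)]
  have hop : ‖mobius α w‖ ≤ Real.sqrt (1 - ε) :=
    opNorm_le_bound _ (Real.sqrt_nonneg _) hbound
  have : Real.sqrt (1 - ε) < Real.sqrt 1 :=
    Real.sqrt_lt_sqrt (by linarith) (by linarith)
  rw [Real.sqrt_one] at this
  linarith
end

section
/- Let H be a complex Hilbert space and α ∈ ℂ with |α| < 1. For any bounded operator w on H with ‖w‖ ≤ 1, φ_{-α}(φ_α(w)) = w, i.e. the Möbius transform φ_α on the closed unit ball of operators has inverse φ_{-α}. -/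
open ContinuousLinearMap

theorem stmt2 {H : Type*} [NormedAddCommGroup H] [InnerProductSpace ℂ H] [CompleteSpace H]
    (α : ℂ) (hα : ‖α‖ < 1) (w : H →L[ℂ] H) (hw : ‖w‖ ≤ 1) :
    mobius (-α) (mobius α w) = w := by
  set c : H →L[ℂ] H := (starRingEnd ℂ α) • w with hc
  have hcn : ‖c‖ < 1 := by
    have : ‖c‖ = ‖α‖ * ‖w‖ := by
      rw [hc, norm_smul, Complex.norm_conj]
    rw [this]
    calc ‖α‖ * ‖w‖ ≤ ‖α‖ * 1 := by
          exact mul_le_mul_of_nonneg_left hw (norm_nonneg α)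
      _ = ‖α‖ := mul_one _
      _ < 1 := hα
  set u : (H →L[ℂ] H)ˣ := Units.oneSub c hcn with hu
  have huval : (u : H →L[ℂ] H) = 1 - c := rfl
  set s : ℂ := 1 - α * (starRingEnd ℂ α) with hs
  have hαα : α * (starRingEnd ℂ α) = (‖α‖ : ℂ) ^ 2 := by
    rw [Complex.mul_conj, Complex.normSq_eq_norm_sq]
    push_cast
    ring
  have hs0 : s ≠ 0 := by
    rw [hs, hαα, sub_ne_zero]
    intro h
    have : (‖α‖ : ℝ) ^ 2 < 1 := by
      have := norm_nonneg α
      nlinarith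
    have h2 : ((‖α‖ : ℂ) ^ 2 : ℂ) = ((‖α‖ ^ 2 : ℝ) : ℂ) := by push_cast; ring
    rw [h2] at h
    have := Complex.ofReal_injective h.symm
    linarith
  set v : H →L[ℂ] H := mobius α w with hv
  have hvinv : v = (w - α • 1) * ↑u⁻¹ := by
    rw [hv, mobius, ← hc, hu, NormedRing.inverse_one_sub c hcn]
  -- Claim A
  have hA : v + α • 1 = s • (w * ↑u⁻¹) := by
    have key : (v + α • 1) * (↑u : H →L[ℂ] H) = s • w := by
      rw [hvinv, add_mul, mul_assoc, Units.inv_mul, mul_one, smul_mul_assoc, one_mul,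
        huval, smul_sub, hc, smul_smul, hs, sub_smul, one_smul]
      abel
    calc v + α • 1 = ((v + α • 1) * ↑u) * ↑u⁻¹ := by
          rw [mul_assoc, Units.mul_inv, mul_one]
      _ = (s • w) * ↑u⁻¹ := by rw [key]
      _ = s • (w * ↑u⁻¹) := smul_mul_assoc s w _
  -- Claim B
  have hB : (1 : H →L[ℂ] H) + (starRingEnd ℂ α) • v = s • (↑u⁻¹ : H →L[ℂ] H) := by
    have key : ((1 : H →L[ℂ] H) + (starRingEnd ℂ α) • v) * (↑u : H →L[ℂ] H)
        = s • (1 : H →L[ℂ] H) := by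
      rw [hvinv, add_mul, one_mul, smul_mul_assoc, mul_assoc, Units.inv_mul, mul_one,
        huval, smul_sub, hc, smul_smul, mul_comm ((starRingEnd ℂ) α) α,
        hs, sub_smul, one_smul]
      abel
    calc (1 : H →L[ℂ] H) + (starRingEnd ℂ α) • v
        = (((1 : H →L[ℂ] H) + (starRingEnd ℂ α) • v) * ↑u) * ↑u⁻¹ := by
          rw [mul_assoc, Units.mul_inv, mul_one]
      _ = (s • (1 : H →L[ℂ] H)) * ↑u⁻¹ := by rw [key]
      _ = s • (↑u⁻¹ : H →L[ℂ] H) := by rw [smul_mul_assoc, one_mul]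
  -- Build unit for s • u⁻¹
  have hsu : IsUnit (s • (↑u⁻¹ : H →L[ℂ] H)) := by
    refine ⟨⟨s • (↑u⁻¹ : H →L[ℂ] H), s⁻¹ • (↑u : H →L[ℂ] H), ?_, ?_⟩, rfl⟩
    · rw [smul_mul_smul_comm, mul_inv_cancel₀ hs0, Units.inv_mul, one_smul]
    · rw [smul_mul_smul_comm, inv_mul_cancel₀ hs0, Units.mul_inv, one_smul]
  have hBinv : Ring.inverse ((1 : H →L[ℂ] H) + (starRingEnd ℂ α) • v)
      = s⁻¹ • (↑u : H →L[ℂ] H) := by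
    rw [hB]
    obtain ⟨U, hU⟩ := hsu
    rw [← hU, Ring.inverse_unit]
    have : (U : H →L[ℂ] H) * (s⁻¹ • (↑u : H →L[ℂ] H)) = 1 := by
      rw [hU, smul_mul_smul_comm, mul_inv_cancel₀ hs0, Units.inv_mul, one_smul]
    calc (↑U⁻¹ : H →L[ℂ] H) = ↑U⁻¹ * ((U : H →L[ℂ] H) * (s⁻¹ • (↑u : H →L[ℂ] H))) := by
          rw [this, mul_one]
      _ = s⁻¹ • (↑u : H →L[ℂ] H) := by rw [← mul_assoc, Units.inv_mul, one_mul]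
  show mobius (-α) v = w
  rw [mobius, map_neg, neg_smul, neg_smul, sub_neg_eq_add, sub_neg_eq_add, hBinv, hA,
    smul_mul_smul_comm, mul_inv_cancel₀ hs0, one_smul, mul_assoc, Units.inv_mul, mul_one]
end

section
/- Let H be a complex Hilbert space and f a bounded operator on H with ‖f‖ ≤ r < 1. Define h := (I + f)(I - f)⁻¹. Then the real part of h satisfies Re h := (h + h*)/2 ≥ ((1 - r)/(1 + r))·I in the sense of positive semidefiniteness of Re h - ((1-r)/(1+r))·I. -/
open ContinuousLinearMap

/-- If `‖f‖ ≤ r < 1` and `h = (I + f)(I - f)⁻¹`, then `Re h ≥ ((1-r)/(1+r))·I` in the sense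
that `Re ⟪x, h x⟫ = ⟪x, (Re h) x⟫ ≥ ((1-r)/(1+r))·‖x‖²` for all `x`. -/
theorem stmt5 {H : Type*} [NormedAddCommGroup H] [InnerProductSpace ℂ H] [CompleteSpace H]
    (f : H →L[ℂ] H) (r : ℝ) (hfr : ‖f‖ ≤ r) (hr : r < 1)
    (h : H →L[ℂ] H) (hh : h = (1 + f) * Ring.inverse ((1 : H →L[ℂ] H) - f)) :
    ∀ x : H, ((1 - r) / (1 + r)) * ‖x‖ ^ 2 ≤ (inner ℂ x (h x) : ℂ).re := by
  intro x
  have hf1 : ‖f‖ < 1 := lt_of_le_of_lt hfr hr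
  have hr0 : (0:ℝ) ≤ r := le_trans (norm_nonneg f) hfr
  set u : (H →L[ℂ] H)ˣ := Units.oneSub f hf1 with hu
  have hinv : Ring.inverse ((1 : H →L[ℂ] H) - f) = (↑u⁻¹ : H →L[ℂ] H) := by
    have h1 : ((1 : H →L[ℂ] H) - f) = (u : H →L[ℂ] H) := rfl
    rw [h1, Ring.inverse_unit]
  set y : H := (↑u⁻¹ : H →L[ℂ] H) x with hy
  have hxy : x = y - f y := by
    have h2 : ((u : H →L[ℂ] H) * ↑u⁻¹) x = x := by
      rw [Units.mul_inv]; simp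
    calc x = ((u : H →L[ℂ] H) * ↑u⁻¹) x := h2.symm
    _ = ((1 : H →L[ℂ] H) - f) y := rfl
    _ = y - f y := by simp [sub_apply]
  have hhx : h x = y + f y := by
    rw [hh, hinv]
    simp [mul_apply, add_apply, ← hy]
  have h1 : (inner ℂ x (h x) : ℂ) =
      (inner ℂ y y : ℂ) + inner ℂ y (f y) - inner ℂ (f y) y - inner ℂ (f y) (f y) := by
    rw [hhx, hxy, inner_sub_left, inner_add_right, inner_add_right]; ring
  have hre : (inner ℂ x (h x) : ℂ).re = ‖y‖ ^ 2 - ‖f y‖ ^ 2 := by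
    rw [h1]
    have e1 : (inner ℂ y y : ℂ).re = ‖y‖ ^ 2 := by
      rw [inner_self_eq_norm_sq_to_K]; simp [← Complex.ofReal_pow]
    have e2 : (inner ℂ (f y) (f y) : ℂ).re = ‖f y‖ ^ 2 := by
      rw [inner_self_eq_norm_sq_to_K]; simp [← Complex.ofReal_pow]
    have e3 : (inner ℂ (f y) y : ℂ).re = (inner ℂ y (f y) : ℂ).re := by
      rw [← inner_conj_symm y (f y), Complex.conj_re]
    simp only [Complex.sub_re, Complex.add_re, e1, e2, e3]; ring
  rw [hre]
  have hny : ‖f y‖ ≤ r * ‖y‖ :=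
    (f.le_opNorm y).trans (mul_le_mul_of_nonneg_right hfr (norm_nonneg y))
  have hx_le : ‖x‖ ≤ (1 + r) * ‖y‖ := by
    rw [hxy]
    calc ‖y - f y‖ ≤ ‖y‖ + ‖f y‖ := norm_sub_le _ _
    _ ≤ (1 + r) * ‖y‖ := by nlinarith
  have h1r : (0:ℝ) < 1 + r := by linarith
  have key : (1 - r) / (1 + r) * ‖x‖ ^ 2 ≤ (1 - r) * (1 + r) * ‖y‖ ^ 2 := by
    rw [div_mul_eq_mul_div, div_le_iff₀ h1r]
    have hsq : ‖x‖ * ‖x‖ ≤ ((1 + r) * ‖y‖) * ((1 + r) * ‖y‖) :=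
      mul_le_mul hx_le hx_le (norm_nonneg x) (by positivity)
    nlinarith [hsq, norm_nonneg x, norm_nonneg y]
  nlinarith [norm_nonneg y, norm_nonneg (f y)]
end

section
/- Let H be a complex Hilbert space and f a bounded operator with ‖f‖ ≤ ρ < 1, and let 0 < r < 1. Then Re((I + r·f)(I - r·f)⁻¹) ≥ ((1 - r²)/4)·I, assuming ‖I - r·f‖ ≤ 2. -/
open ContinuousLinearMap

/-- If `‖f‖ ≤ ρ < 1`, `0 < r < 1` and `‖I - r·f‖ ≤ 2`, then
`Re((I + r·f)(I - r·f)⁻¹) ≥ ((1 - r²)/4)·I`. -/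
theorem stmt11 {H : Type*} [NormedAddCommGroup H] [InnerProductSpace ℂ H] [CompleteSpace H]
    (f : H →L[ℂ] H) (ρ : ℝ) (hfρ : ‖f‖ ≤ ρ) (hρ : ρ < 1)
    (r : ℝ) (hr0 : 0 < r) (hr1 : r < 1)
    (hnorm : ‖(1 : H →L[ℂ] H) - (r : ℂ) • f‖ ≤ 2) :
    ∀ x : H, ((1 - r ^ 2) / 4) * ‖x‖ ^ 2 ≤
      (inner ℂ x ((((1 : H →L[ℂ] H) + (r : ℂ) • f) *
        Ring.inverse ((1 : H →L[ℂ] H) - (r : ℂ) • f)) x) : ℂ).re := by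
  intro x
  set A : H →L[ℂ] H := (1 : H →L[ℂ] H) - (r : ℂ) • f with hAdef
  have hrf : ‖(r : ℂ) • f‖ < 1 := by
    rw [norm_smul]
    have : ‖(r : ℂ)‖ = r := by
      simp [Complex.norm_real, abs_of_pos hr0]
    rw [this]
    nlinarith [norm_nonneg f, (norm_nonneg f).trans hfρ]
  have hU : IsUnit A := ⟨Units.oneSub ((r : ℂ) • f) hrf, rfl⟩
  set y : H := Ring.inverse A x with hy
  have hAy : A y = x := by
    have h1 : A * Ring.inverse A = 1 := Ring.mul_inverse_cancel A hU
    calc A y = (A * Ring.inverse A) x := rfl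
      _ = x := by rw [h1]; rfl
  have hx : x = y - (r : ℂ) • f y := by
    rw [← hAy]; simp [hAdef, sub_apply, smul_apply, one_apply]
  have happ : ((((1 : H →L[ℂ] H) + (r : ℂ) • f) * Ring.inverse A) x)
      = y + (r : ℂ) • f y := by
    simp [mul_apply, add_apply, smul_apply, one_apply, ← hy]
  rw [happ]
  set u : H := (r : ℂ) • f y with hu
  have hinner : (inner ℂ x (y + u) : ℂ).re = ‖y‖ ^ 2 - ‖u‖ ^ 2 := by
    rw [hx]
    have hsym : (inner ℂ u y : ℂ) = starRingEnd ℂ (inner ℂ y u) := (inner_conj_symm u y).symm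
    simp only [inner_sub_left, inner_add_right]
    rw [hsym]
    simp only [Complex.sub_re, Complex.add_re, Complex.conj_re]
    have h1 : (inner ℂ y y : ℂ).re = ‖y‖ ^ 2 := by
      rw [inner_self_eq_norm_sq_to_K]; simp [← Complex.ofReal_pow]
    have h2 : (inner ℂ u u : ℂ).re = ‖u‖ ^ 2 := by
      rw [inner_self_eq_norm_sq_to_K]; simp [← Complex.ofReal_pow]
    rw [h1, h2]; ring
  rw [hinner]
  have hfy : ‖f y‖ ≤ ‖y‖ := by
    have := f.le_opNorm y
    nlinarith [norm_nonneg y]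
  have hun : ‖u‖ ≤ r * ‖y‖ := by
    rw [hu, norm_smul]
    have : ‖(r : ℂ)‖ = r := by simp [Complex.norm_real, abs_of_pos hr0]
    rw [this]
    nlinarith
  have hxn : ‖x‖ ≤ 2 * ‖y‖ := by
    rw [← hAy]
    exact (A.le_opNorm y).trans (by nlinarith [norm_nonneg y])
  have h1 : ‖x‖ ^ 2 ≤ 4 * ‖y‖ ^ 2 := by nlinarith [norm_nonneg x, norm_nonneg y]
  have h2 : ‖u‖ ^ 2 ≤ r ^ 2 * ‖y‖ ^ 2 := by nlinarith [norm_nonneg u, norm_nonneg y]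
  have hc : (0:ℝ) ≤ 1 - r ^ 2 := by nlinarith
  nlinarith [mul_nonneg hc (by linarith : (0:ℝ) ≤ 4 * ‖y‖ ^ 2 - ‖x‖ ^ 2), h2]
end

section
/- Let H be a complex Hilbert space, f a bounded operator with ‖f‖ ≤ 1, and 0 < r < 1. Then there exists N ∈ ℕ such that for all n ≥ N, Re((I + r·f) · ∑_{k=0}^{n} (r·f)^k) ≥ 0 (positive semidefinite). -/
open ContinuousLinearMap

set_option maxHeartbeats 1000000 in
/-- For a contraction `f` and `0 < r < 1`, eventually the partial Cayley sums
`(I + r·f)·∑_{k=0}^{n}(r·f)^k` have positive semidefinite real part. -/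
theorem stmt12 {H : Type*} [NormedAddCommGroup H] [InnerProductSpace ℂ H] [CompleteSpace H]
    (f : H →L[ℂ] H) (hf : ‖f‖ ≤ 1) (r : ℝ) (hr0 : 0 < r) (hr1 : r < 1) :
    ∃ N : ℕ, ∀ n ≥ N, ∀ x : H,
      0 ≤ (inner ℂ x ((((1 : H →L[ℂ] H) + (r : ℂ) • f) *
        ∑ k ∈ Finset.range (n + 1), ((r : ℂ) • f) ^ k) x) : ℂ).re := by
  set g : H →L[ℂ] H := (r : ℂ) • f with hg
  have hgnorm : ‖g‖ ≤ r := by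
    rw [hg, norm_smul, Complex.norm_real, Real.norm_eq_abs, abs_of_pos hr0]
    nlinarith
  have hε : (0:ℝ) < (1 - r ^ 2) / 8 := by nlinarith
  obtain ⟨N, hN⟩ := exists_pow_lt_of_lt_one hε hr1
  refine ⟨N, fun n hn x => ?_⟩
  set S : H →L[ℂ] H := ∑ k ∈ Finset.range (n + 1), g ^ k with hS
  set y : H := S x with hy
  have hrn : r ^ (n + 1) ≤ (1 - r ^ 2) / 8 := by
    calc r ^ (n + 1) ≤ r ^ N := by
          apply pow_le_pow_of_le_one hr0.le hr1.le; omega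
      _ ≤ (1 - r ^ 2) / 8 := hN.le
  have hcomm : Commute g S := Commute.sum_right _ _ _ fun k _ => (Commute.refl g).pow_right k
  have key : (1 - g) * S = 1 - g ^ (n + 1) := by
    have h1 : S * (g - 1) = g ^ (n + 1) - 1 := geom_sum_mul g (n + 1)
    have h2 : (1 - g) * S = S * (1 - g) := ((Commute.one_left S).sub_left hcomm).eq
    rw [h2]
    calc S * (1 - g) = -(S * (g - 1)) := by noncomm_ring
      _ = -(g ^ (n + 1) - 1) := by rw [h1]
      _ = 1 - g ^ (n + 1) := by noncomm_ring
  have hx : (1 - g) y = x - (g ^ (n + 1)) x := by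
    have := congrArg (fun T : H →L[ℂ] H => T x) key
    simpa [mul_apply, sub_apply, one_apply] using this
  -- norms
  have hny : ‖g y‖ ≤ r * ‖y‖ := by
    calc ‖g y‖ ≤ ‖g‖ * ‖y‖ := g.le_opNorm y
      _ ≤ r * ‖y‖ := by gcongr
  have hgn : ‖(g ^ (n + 1)) x‖ ≤ r ^ (n + 1) * ‖x‖ := by
    calc ‖(g ^ (n + 1)) x‖ ≤ ‖g ^ (n + 1)‖ * ‖x‖ := (g ^ (n + 1)).le_opNorm x
      _ ≤ ‖g‖ ^ (n + 1) * ‖x‖ :=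
            mul_le_mul_of_nonneg_right (norm_pow_le' g (Nat.succ_pos n)) (norm_nonneg x)
      _ ≤ r ^ (n + 1) * ‖x‖ := by
            have : ‖g‖ ^ (n + 1) ≤ r ^ (n + 1) := pow_le_pow_left₀ (norm_nonneg g) hgnorm _
            nlinarith [norm_nonneg x]
  have hxy : ‖x‖ ≤ 4 * ‖y‖ := by
    have h1 : ‖x‖ ≤ ‖(1 - g) y‖ + ‖(g ^ (n + 1)) x‖ := by
      have : x = (1 - g) y + (g ^ (n + 1)) x := by rw [hx]; abel
      calc ‖x‖ = ‖(1 - g) y + (g ^ (n + 1)) x‖ := by rw [← this]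
        _ ≤ _ := norm_add_le _ _
    have h2 : ‖(1 - g) y‖ ≤ 2 * ‖y‖ := by
      rw [sub_apply, ContinuousLinearMap.one_apply]
      calc ‖y - g y‖ ≤ ‖y‖ + ‖g y‖ := norm_sub_le _ _
        _ ≤ 2 * ‖y‖ := by nlinarith [norm_nonneg y]
    have h3 : r ^ (n + 1) ≤ 1 / 2 := by nlinarith
    nlinarith [norm_nonneg x, norm_nonneg y]
  -- the inner product computation
  set z : H := ((1 : H →L[ℂ] H) + g) y with hz
  have hgoal : (((1 : H →L[ℂ] H) + g) * S) x = z := by simp [mul_apply, hz, hy]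
  rw [hgoal]
  have hsplit : (inner ℂ x z : ℂ) = inner ℂ ((1 - g) y) z + inner ℂ ((g ^ (n + 1)) x) z := by
    rw [← inner_add_left]
    congr 1
    rw [hx]; abel
  have hre1 : ((inner ℂ ((1 - g) y) z : ℂ)).re = ‖y‖ ^ 2 - ‖g y‖ ^ 2 := by
    rw [hz]
    simp only [sub_apply, add_apply, ContinuousLinearMap.one_apply]
    rw [inner_sub_left, inner_add_right, inner_add_right]
    have h1 : ((inner ℂ y y : ℂ)).re = ‖y‖ ^ 2 := by
      rw [inner_self_eq_norm_sq_to_K]; norm_cast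
    have h2 : ((inner ℂ (g y) (g y) : ℂ)).re = ‖g y‖ ^ 2 := by
      rw [inner_self_eq_norm_sq_to_K]; norm_cast
    have h3 : ((inner ℂ y (g y) : ℂ)).re = ((inner ℂ (g y) y : ℂ)).re := by
      rw [← inner_conj_symm y (g y), Complex.conj_re]
    simp only [Complex.sub_re, Complex.add_re]
    linarith
  have hre2 : |((inner ℂ ((g ^ (n + 1)) x) z : ℂ)).re| ≤ r ^ (n + 1) * ‖x‖ * (2 * ‖y‖) := by
    have h1 : |((inner ℂ ((g ^ (n + 1)) x) z : ℂ)).re| ≤ ‖(g ^ (n + 1)) x‖ * ‖z‖ := by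
      calc |((inner ℂ ((g ^ (n + 1)) x) z : ℂ)).re| ≤ ‖(inner ℂ ((g ^ (n + 1)) x) z : ℂ)‖ :=
            Complex.abs_re_le_norm _
        _ ≤ _ := norm_inner_le_norm _ _
    have h2 : ‖z‖ ≤ 2 * ‖y‖ := by
      rw [hz]
      simp only [add_apply, one_apply]
      calc ‖y + g y‖ ≤ ‖y‖ + ‖g y‖ := norm_add_le _ _
        _ ≤ 2 * ‖y‖ := by nlinarith [norm_nonneg y]
    calc |((inner ℂ ((g ^ (n + 1)) x) z : ℂ)).re| ≤ ‖(g ^ (n + 1)) x‖ * ‖z‖ := h1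
      _ ≤ (r ^ (n + 1) * ‖x‖) * (2 * ‖y‖) := by
          apply mul_le_mul hgn h2 (norm_nonneg _)
          positivity
      _ = r ^ (n + 1) * ‖x‖ * (2 * ‖y‖) := by ring
  have hexp : ((inner ℂ x z : ℂ)).re =
      ‖y‖ ^ 2 - ‖g y‖ ^ 2 + ((inner ℂ ((g ^ (n + 1)) x) z : ℂ)).re := by
    rw [hsplit, Complex.add_re, hre1]
  rw [hexp]
  have habs := abs_le.mp hre2
  have hgy2 : ‖g y‖ ^ 2 ≤ r ^ 2 * ‖y‖ ^ 2 := by nlinarith [norm_nonneg (g y), norm_nonneg y]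
  have hrpos : (0:ℝ) < r ^ (n + 1) := pow_pos hr0 _
  have hb : r ^ (n + 1) * ‖x‖ * (2 * ‖y‖) ≤ (1 - r ^ 2) * ‖y‖ ^ 2 := by
    have h4 : r ^ (n + 1) * ‖x‖ ≤ r ^ (n + 1) * (4 * ‖y‖) :=
      mul_le_mul_of_nonneg_left hxy hrpos.le
    nlinarith [norm_nonneg y, norm_nonneg x,
      mul_le_mul_of_nonneg_right hrn (mul_nonneg (norm_nonneg y) (norm_nonneg y))]
  linarith [habs.1]
end

section
/- Let U = [[A, B], [C, 0]] : (X ⊕ ℂ) → (Y ⊕ ℂ) be a unitary operator between Hilbert space direct sums (with D = 0), and let T : X → Y be a bounded operator with ‖T‖ ≤ r ≤ 1 such that I - T∘A is invertible. Then the operator F := C ∘ (I - T∘A)⁻¹ ∘ T ∘ B : ℂ → ℂ (i.e. a scalar) satisfies |F| ≤ r. Equivalently, r²·I - F F* = C (I - TA)⁻¹ [r²·I - T T* + (1 - r²)·T A A* T*] (I - A* T*)⁻¹ C* ≥ 0. -/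
open ContinuousLinearMap

/-- Scalar-output transfer-function estimate (Schwarz lemma step). The block operator
`U = [[A, B], [C, 0]] : X ⊕ ℂ → Y ⊕ ℂ` is unitary, which is encoded by the block relations
coming from `U U* = I` and `U* U = I` (with `D = 0`). If `‖T‖ ≤ r ≤ 1` and `I - T∘A` is
invertible, then the scalar `F = C (I - TA)⁻¹ T B` satisfies `‖F‖ ≤ r`. -/
theorem stmt14 {X Y : Type*} [NormedAddCommGroup X] [InnerProductSpace ℂ X] [CompleteSpace X]
    [NormedAddCommGroup Y] [InnerProductSpace ℂ Y] [CompleteSpace Y]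
    (A : X →L[ℂ] Y) (B : ℂ →L[ℂ] Y) (C : X →L[ℂ] ℂ)
    -- relations from U U* = I :
    (h11 : A ∘L adjoint A + B ∘L adjoint B = 1)
    (h12 : A ∘L adjoint C = 0)
    (h21 : C ∘L adjoint A = 0)
    (h22 : C ∘L adjoint C = 1)
    -- relations from U* U = I :
    (k11 : adjoint A ∘L A + adjoint C ∘L C = 1)
    (k12 : adjoint A ∘L B = 0)
    (k22 : adjoint B ∘L B = 1)
    (T : Y →L[ℂ] X) (r : ℝ) (hT : ‖T‖ ≤ r) (hr : r ≤ 1)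
    (hinv : IsUnit ((1 : X →L[ℂ] X) - T ∘L A)) :
    ‖C ∘L Ring.inverse ((1 : X →L[ℂ] X) - T ∘L A) ∘L T ∘L B‖ ≤ r := by
  have hr0 : (0:ℝ) ≤ r := le_trans (norm_nonneg T) hT
  set S := Ring.inverse ((1 : X →L[ℂ] X) - T ∘L A) with hSdef
  set y := B 1 with hy
  set x := S (T y) with hx
  have hcancel : ((1 : X →L[ℂ] X) - T ∘L A) ∘L S = 1 := Ring.mul_inverse_cancel _ hinv
  clear_value S
  clear_value x
  clear_value y
  have hx1 : x - T (A x) = T y := by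
    have h := congrArg (fun f => f (T y)) hcancel
    simpa [sub_apply, comp_apply, ← hx] using h
  have hxeq : x = T (A x + y) := by
    rw [map_add, ← hx1]; abel
  have hnx : ‖x‖^2 = ‖A x‖^2 + ‖C x‖^2 := by
    have h := congrArg (fun f => f x) k11
    simp only [add_apply, comp_apply, one_apply] at h
    have h2 : (inner ℂ (adjoint A (A x) + adjoint C (C x)) x : ℂ) = inner ℂ x x := by rw [h]; rfl
    rw [inner_add_left, adjoint_inner_left, adjoint_inner_left,
      inner_self_eq_norm_sq_to_K, inner_self_eq_norm_sq_to_K, inner_self_eq_norm_sq_to_K] at h2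
    exact_mod_cast h2.symm
  have horth : (inner ℂ (A x) y : ℂ) = 0 := by
    have h := congrArg (fun f => f 1) k12
    simp only [comp_apply, zero_apply] at h
    have h2 : (inner ℂ x (adjoint A y) : ℂ) = 0 := by rw [hy, h]; simp
    rwa [adjoint_inner_right] at h2
  have hny : ‖y‖ = 1 := by
    have h := congrArg (fun f => f 1) k22
    simp only [comp_apply, one_apply] at h
    have h2 : (inner ℂ (B 1) (B 1) : ℂ) = 1 := by
      rw [← adjoint_inner_left, h]
      simp
    have h3 : ‖y‖^2 = 1 := by
      have h4 : RCLike.re (inner ℂ (B 1) (B 1) : ℂ) = RCLike.re (1:ℂ) := by rw [h2]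
      rw [inner_self_eq_norm_sq] at h4
      simpa [hy] using h4
    have h5 : (‖y‖ - 1) * (‖y‖ + 1) = 0 := by linear_combination h3
    rcases mul_eq_zero.mp h5 with h6 | h6
    · linarith
    · linarith [norm_nonneg y]
  have hpyth : ‖A x + y‖^2 = ‖A x‖^2 + 1 := by
    rw [@norm_add_sq ℂ, horth, hny]
    simp
  have hb : ‖x‖ ≤ r * ‖A x + y‖ := by
    nth_rewrite 1 [hxeq]
    calc ‖T (A x + y)‖ ≤ ‖T‖ * ‖A x + y‖ := le_opNorm T _
      _ ≤ r * ‖A x + y‖ := mul_le_mul_of_nonneg_right hT (norm_nonneg _)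
  have hCx : ‖C x‖ ≤ r := by
    clear hSdef hinv hcancel hx1 hxeq hx hy horth h11 h12 h21 h22 k11 k12 k22
    have h1 : ‖x‖^2 ≤ r^2 * (‖A x‖^2 + 1) := by
      rw [← hpyth]
      nlinarith [norm_nonneg x, norm_nonneg (A x + y)]
    have h2 : ‖C x‖^2 ≤ r^2 := by
      nlinarith [mul_nonneg (mul_nonneg (by linarith : (0:ℝ) ≤ 1 - r)
        (by linarith : (0:ℝ) ≤ 1 + r)) (sq_nonneg ‖A x‖)]
    nlinarith [norm_nonneg (C x)]
  refine opNorm_le_bound _ hr0 fun z => ?_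
  have hBz : B z = z • y := by
    rw [hy, ← map_smul]; norm_num [smul_eq_mul]
  have hz : (C ∘L S ∘L T ∘L B) z = z • (C x) := by
    simp [comp_apply, hBz, map_smul, hx]
  rw [hz, norm_smul]
  calc ‖z‖ * ‖C x‖ ≤ ‖z‖ * r := mul_le_mul_of_nonneg_left hCx (norm_nonneg z)
    _ = r * ‖z‖ := mul_comm _ _
end

section
/- Let H be a complex Hilbert space and h, h' bounded operators on H with Re h ≥ c·I and Re h' ≥ c·I for some c > 0, and ‖h‖, ‖h'‖ ≤ M. Then ‖(h - I)(h + I)⁻¹ - (h' - I)(h' + I)⁻¹‖ ≤ (1/√(2c+1) + 2·(M+1)/(2c+1))·‖h - h'‖. In particular the Cayley transform h ↦ (h - I)(h + I)⁻¹ is Lipschitz on {h : Re h ≥ c·I, ‖h‖ ≤ M}. -/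
open ContinuousLinearMap

/-- A coercive operator on a complex Hilbert space is invertible, with inverse bounded
by `1/k`. -/
lemma coercive_isUnit {H : Type*} [NormedAddCommGroup H] [InnerProductSpace ℂ H]
    [CompleteSpace H] (g : H →L[ℂ] H) (k : ℝ) (hk : 0 < k)
    (hg : ∀ x : H, k * ‖x‖ ^ 2 ≤ (inner ℂ x (g x) : ℂ).re) :
    ∃ u : (H →L[ℂ] H)ˣ, (u : H →L[ℂ] H) = g ∧
      ‖((↑u⁻¹ : H →L[ℂ] H))‖ ≤ 1 / k := by
  have key : ∀ x : H, k * ‖x‖ ≤ ‖g x‖ := by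
    intro x
    rcases eq_or_ne x 0 with rfl | hx
    · simp
    · have h1 : k * ‖x‖ ^ 2 ≤ ‖x‖ * ‖g x‖ := by
        calc k * ‖x‖ ^ 2 ≤ (inner ℂ x (g x) : ℂ).re := hg x
        _ ≤ ‖(inner ℂ x (g x) : ℂ)‖ := Complex.re_le_norm _
        _ ≤ ‖x‖ * ‖g x‖ := norm_inner_le_norm _ _
      have hxpos : (0:ℝ) < ‖x‖ := norm_pos_iff.mpr hx
      nlinarith
  have hbound : ∀ x : H, ‖x‖ ≤ (1 / k) * ‖g x‖ := by
    intro x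
    have h1 := key x
    have h2 : ‖x‖ = (1 / k) * (k * ‖x‖) := by field_simp
    rw [h2]
    have h3 : (0:ℝ) ≤ 1 / k := by positivity
    calc (1/k) * (k * ‖x‖) ≤ (1/k) * ‖g x‖ := by gcongr
      _ = (1/k) * ‖g x‖ := rfl
  have hanti : AntilipschitzWith (⟨1/k, by positivity⟩ : NNReal) g :=
    g.antilipschitz_of_bound hbound
  have hinj : Function.Injective g := hanti.injective
  have hker : LinearMap.ker (g : H →ₗ[ℂ] H) = ⊥ := (LinearMap.ker_eq_bot (f := (g : H →ₗ[ℂ] H))).mpr hinj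
  -- closed range
  have hclosed : IsClosed (Set.range g) :=
    (hanti.isClosedEmbedding g.uniformContinuous).isClosed_range
  have hclosedK : IsClosed ((LinearMap.range (g : H →ₗ[ℂ] H) : Submodule ℂ H) : Set H) := by
    convert hclosed using 1
    exact LinearMap.coe_range _
  haveI : CompleteSpace (LinearMap.range (g : H →ₗ[ℂ] H) : Submodule ℂ H) :=
    hclosedK.completeSpace_coe
  have hrange : LinearMap.range (g : H →ₗ[ℂ] H) = ⊤ := by
    rw [← Submodule.orthogonal_eq_bot_iff]
    rw [Submodule.eq_bot_iff]
    intro y hy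
    have h0 : (inner ℂ (g y) y : ℂ) = 0 := hy (g y) (LinearMap.mem_range_self _ y)
    have h0' : (inner ℂ y (g y) : ℂ) = 0 := by
      rw [← inner_conj_symm, h0, map_zero]
    have := hg y
    rw [h0'] at this
    simp only [Complex.zero_re] at this
    have : ‖y‖ ^ 2 ≤ 0 := by nlinarith
    have : ‖y‖ = 0 := by nlinarith [sq_nonneg ‖y‖, norm_nonneg y]
    exact norm_eq_zero.mp this
  let e := ContinuousLinearEquiv.ofBijective g hker hrange
  have hce : ⇑e = ⇑g := ContinuousLinearEquiv.coeFn_ofBijective g hker hrange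
  have h1 : ∀ y : H, g (e.symm y) = y := by
    intro y
    have h0 : e (e.symm y) = y := e.apply_symm_apply y
    rwa [hce] at h0
  have h2 : ∀ x : H, e.symm (g x) = x := by
    intro x
    have h0 : e.symm (e x) = x := e.symm_apply_apply x
    rwa [hce] at h0
  refine ⟨⟨g, e.symm.toContinuousLinearMap, ?_, ?_⟩, rfl, ?_⟩
  · ext x
    exact h1 x
  · ext x
    exact h2 x
  · apply opNorm_le_bound _ (by positivity)
    intro y
    calc ‖e.symm.toContinuousLinearMap y‖ = ‖e.symm y‖ := rfl
      _ ≤ (1/k) * ‖g (e.symm y)‖ := hbound _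
      _ = (1/k) * ‖y‖ := by rw [h1 y]

/-- The Cayley transform `h ↦ (h - I)(h + I)⁻¹` is Lipschitz on
`{h : Re h ≥ c·I, ‖h‖ ≤ M}` with the explicit constant `1/√(2c+1) + 2(M+1)/(2c+1)`. -/
theorem stmt16 {H : Type*} [NormedAddCommGroup H] [InnerProductSpace ℂ H] [CompleteSpace H]
    (h h' : H →L[ℂ] H) (c M : ℝ) (hc : 0 < c)
    (hpos : ∀ x : H, c * ‖x‖ ^ 2 ≤ (inner ℂ x (h x) : ℂ).re)
    (hpos' : ∀ x : H, c * ‖x‖ ^ 2 ≤ (inner ℂ x (h' x) : ℂ).re)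
    (hM : ‖h‖ ≤ M) (hM' : ‖h'‖ ≤ M) :
    ‖(h - 1) * Ring.inverse (h + 1) - (h' - 1) * Ring.inverse (h' + 1)‖ ≤
      (1 / Real.sqrt (2 * c + 1) + 2 * (M + 1) / (2 * c + 1)) * ‖h - h'‖ := by
  have coer : ∀ (g : H →L[ℂ] H), (∀ x : H, c * ‖x‖ ^ 2 ≤ (inner ℂ x (g x) : ℂ).re) →
      ∀ x : H, (c + 1) * ‖x‖ ^ 2 ≤ (inner ℂ x ((g + 1) x) : ℂ).re := by
    intro g hg x
    have : (inner ℂ x ((g + 1) x) : ℂ) = inner ℂ x (g x) + inner ℂ x x := by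
      simp [inner_add_right]
    rw [this]
    rw [Complex.add_re]
    have h2 : (inner ℂ x x : ℂ).re = ‖x‖ ^ 2 := by
      have h0 := inner_self_eq_norm_sq (𝕜 := ℂ) x
      rwa [RCLike.re_to_complex] at h0
    rw [h2]
    nlinarith [hg x]
  obtain ⟨u, hu, hinv⟩ := coercive_isUnit (h + 1) (c + 1) (by linarith) (coer h hpos)
  obtain ⟨u', hu', hinv'⟩ := coercive_isUnit (h' + 1) (c + 1) (by linarith) (coer h' hpos')
  rw [← hu, ← hu', Ring.inverse_unit, Ring.inverse_unit]
  have cayley : ∀ (g : H →L[ℂ] H) (v : (H →L[ℂ] H)ˣ), (v : H →L[ℂ] H) = g + 1 →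
      (g - 1) * (↑v⁻¹ : H →L[ℂ] H) = 1 - 2 • (↑v⁻¹ : H →L[ℂ] H) := by
    intro g v hv
    have : g - 1 = (v : H →L[ℂ] H) - 2 • (1 : H →L[ℂ] H) := by
      rw [hv, two_smul]; abel
    rw [this, sub_mul, smul_mul_assoc, one_mul]
    congr 1
    exact Units.mul_inv v
  rw [cayley h u hu, cayley h' u' hu']
  have key : (1 - 2 • (↑u⁻¹ : H →L[ℂ] H)) - (1 - 2 • (↑u'⁻¹ : H →L[ℂ] H)) =
      2 • ((↑u'⁻¹ : H →L[ℂ] H) - (↑u⁻¹ : H →L[ℂ] H)) := by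
    rw [smul_sub]; abel
  rw [key]
  have resolvent : (↑u'⁻¹ : H →L[ℂ] H) - (↑u⁻¹ : H →L[ℂ] H) =
      (↑u'⁻¹ : H →L[ℂ] H) * (h - h') * (↑u⁻¹ : H →L[ℂ] H) := by
    have : (↑u'⁻¹ : H →L[ℂ] H) * ((u : H →L[ℂ] H) - (u' : H →L[ℂ] H)) * (↑u⁻¹ : H →L[ℂ] H)
        = (↑u'⁻¹ : H →L[ℂ] H) - (↑u⁻¹ : H →L[ℂ] H) := by
      rw [mul_sub, sub_mul]
      have h1 : (↑u'⁻¹ : H →L[ℂ] H) * (u : H →L[ℂ] H) * (↑u⁻¹ : H →L[ℂ] H)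
          = (↑u'⁻¹ : H →L[ℂ] H) := by
        rw [mul_assoc, Units.mul_inv, mul_one]
      have h2 : (↑u'⁻¹ : H →L[ℂ] H) * (u' : H →L[ℂ] H) * (↑u⁻¹ : H →L[ℂ] H)
          = (↑u⁻¹ : H →L[ℂ] H) := by
        rw [Units.inv_mul, one_mul]
      rw [h1, h2]
    rw [← this, hu, hu']
    congr 1
    congr 1
    abel
  rw [resolvent]
  have hterm : ‖(↑u'⁻¹ : H →L[ℂ] H) * (h - h') * (↑u⁻¹ : H →L[ℂ] H)‖ ≤
      (1/(c+1)) * ‖h - h'‖ * (1/(c+1)) := by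
    calc ‖(↑u'⁻¹ : H →L[ℂ] H) * (h - h') * (↑u⁻¹ : H →L[ℂ] H)‖
        ≤ ‖(↑u'⁻¹ : H →L[ℂ] H) * (h - h')‖ * ‖(↑u⁻¹ : H →L[ℂ] H)‖ := norm_mul_le _ _
      _ ≤ (‖(↑u'⁻¹ : H →L[ℂ] H)‖ * ‖h - h'‖) * ‖(↑u⁻¹ : H →L[ℂ] H)‖ := by
          gcongr
          exact norm_mul_le _ _
      _ ≤ ((1/(c+1)) * ‖h - h'‖) * (1/(c+1)) := by
          have h0 : (0:ℝ) ≤ ‖h - h'‖ := norm_nonneg _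
          have h1 : (0:ℝ) ≤ ‖(↑u'⁻¹ : H →L[ℂ] H)‖ := norm_nonneg _
          have h2 : (0:ℝ) ≤ ‖(↑u⁻¹ : H →L[ℂ] H)‖ := norm_nonneg _
          gcongr
  have hnorm : ‖(2 : ℕ) • ((↑u'⁻¹ : H →L[ℂ] H) * (h - h') * (↑u⁻¹ : H →L[ℂ] H))‖ ≤
      2 * ((1 / (c+1)) * ‖h - h'‖ * (1 / (c+1))) := by
    rw [two_smul]
    calc ‖(↑u'⁻¹ : H →L[ℂ] H) * (h - h') * (↑u⁻¹ : H →L[ℂ] H) +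
          (↑u'⁻¹ : H →L[ℂ] H) * (h - h') * (↑u⁻¹ : H →L[ℂ] H)‖
        ≤ ‖(↑u'⁻¹ : H →L[ℂ] H) * (h - h') * (↑u⁻¹ : H →L[ℂ] H)‖ +
          ‖(↑u'⁻¹ : H →L[ℂ] H) * (h - h') * (↑u⁻¹ : H →L[ℂ] H)‖ := norm_add_le _ _
      _ ≤ 2 * ((1 / (c+1)) * ‖h - h'‖ * (1 / (c+1))) := by linarith
  refine le_trans hnorm ?_
  have hM0 : (0:ℝ) ≤ M := le_trans (norm_nonneg h) hM
  have hsqrt : (0:ℝ) < Real.sqrt (2 * c + 1) := Real.sqrt_pos.mpr (by linarith)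
  have hfac : 2 * ((1/(c+1)) * (1/(c+1))) ≤ 2 * (M + 1) / (2 * c + 1) := by
    have heq : 2 * ((1/(c+1)) * (1/(c+1))) = 2 / ((c+1)*(c+1)) := by
      field_simp
    rw [heq, div_le_div_iff₀ (by positivity) (by linarith)]
    nlinarith [sq_nonneg c]
  have : 2 * ((1 / (c+1)) * ‖h - h'‖ * (1 / (c+1))) =
      (2 * ((1/(c+1)) * (1/(c+1)))) * ‖h - h'‖ := by ring
  rw [this]
  gcongr ?_ * ‖h - h'‖
  calc 2 * ((1/(c+1)) * (1/(c+1))) ≤ 2 * (M + 1) / (2 * c + 1) := hfac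
    _ ≤ 1 / Real.sqrt (2 * c + 1) + 2 * (M + 1) / (2 * c + 1) :=
      le_add_of_nonneg_left (by positivity)
end
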